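/- Let H be a real Hilbert space, A : H → H a nonexpansive map (‖A(v) − A(v')‖ ≤ ‖v − v'‖ for all v, v' ∈ H), and v₀ ∈ H. Assume that ‖A^{n+1}(v₀) − A^n(v₀)‖ → 0 as n → ∞ and that A has at least one fixed point. Then there exists v* ∈ H with A(v*) = v* such that the sequence (A^n(v₀))_{n∈ℕ} converges weakly to v*. -/

import Mathlib

open Filter BoundedContinuousFunction

lemma exists_genlim :
    ∃ L : (ℕ →ᵇ ℝ) →ₗ[ℝ] ℝ,
      (∀ a : ℕ →ᵇ ℝ, L a ≤ ⨆ n, a n) ∧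
      (∀ (a : ℕ →ᵇ ℝ) (l : ℝ), Tendsto (⇑a) atTop (nhds l) → L a = l) := by
  classical
  set S : Submodule ℝ (ℕ →ᵇ ℝ) :=
    { carrier := {a | ∃ l : ℝ, Tendsto (⇑a) atTop (nhds l)}
      add_mem' := by
        rintro a b ⟨l, hl⟩ ⟨m, hm⟩
        exact ⟨l + m, by simpa [Pi.add_def] using hl.add hm⟩
      zero_mem' := ⟨0, by simpa [Pi.zero_def] using (tendsto_const_nhds : Tendsto (fun _ : ℕ => (0:ℝ)) atTop (nhds 0))⟩
      smul_mem' := by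
        rintro c a ⟨l, hl⟩
        exact ⟨c * l, by simpa using hl.const_mul c⟩ } with hS
  have hmem : ∀ a : S, Tendsto (⇑(a : ℕ →ᵇ ℝ)) atTop (nhds (Classical.choose a.2)) :=
    fun a => Classical.choose_spec a.2
  set f : S →ₗ[ℝ] ℝ :=
    { toFun := fun a => Classical.choose a.2
      map_add' := by
        intro a b
        refine tendsto_nhds_unique (hmem (a + b)) ?_
        simpa [Pi.add_def] using (hmem a).add (hmem b)
      map_smul' := by
        intro c a
        refine tendsto_nhds_unique (hmem (c • a)) ?_
        simpa using (hmem a).const_mul c } with hf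
  have hbdd : ∀ a : ℕ →ᵇ ℝ, BddAbove (Set.range (⇑a)) :=
    fun a => a.isBounded_range.bddAbove
  obtain ⟨g, hg1, hg2⟩ := exists_extension_of_le_sublinear ⟨S, f⟩ (fun a => ⨆ n, a n)
    (fun c hc a => by
      simpa using (Real.mul_iSup_of_nonneg hc.le (fun n => a n)).symm)
    (fun a b => ciSup_le fun n =>
      add_le_add (le_ciSup (hbdd a) n) (le_ciSup (hbdd b) n))
    (fun a => le_of_tendsto (hmem a) (Eventually.of_forall fun n => le_ciSup (hbdd _) n))
  refine ⟨g, hg2, ?_⟩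
  intro a l hl
  have ha : a ∈ S := ⟨l, hl⟩
  have := hg1 ⟨a, ha⟩
  rw [this]
  exact tendsto_nhds_unique (hmem ⟨a, ha⟩) hl

open scoped RealInnerProductSpace
open Filter BoundedContinuousFunction

lemma key_lemma {H : Type*} [NormedAddCommGroup H] [InnerProductSpace ℝ H] [CompleteSpace H]
    (A : H → H) (hA : ∀ v v' : H, ‖A v - A v'‖ ≤ ‖v - v'‖)
    (v0 : H)
    (hreg : Tendsto (fun n => ‖A^[n + 1] v0 - A^[n] v0‖) atTop (nhds 0))
    (L : (ℕ →ᵇ ℝ) →ₗ[ℝ] ℝ)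
    (hL1 : ∀ a : ℕ →ᵇ ℝ, L a ≤ ⨆ n, a n)
    (hL2 : ∀ (a : ℕ →ᵇ ℝ) (l : ℝ), Tendsto (⇑a) atTop (nhds l) → L a = l)
    (R : ℝ) (hR : ∀ n, ‖A^[n] v0‖ ≤ R)
    (k : ℕ → ℕ) (hk : Tendsto k atTop atTop) :
    ∃ w : H, A w = w ∧
      ∀ (y : H) (a : ℕ →ᵇ ℝ), (∀ j, a j = ⟪A^[k j] v0, y⟫) → L a = ⟪w, y⟫ := by
  classical
  set x : ℕ → H := fun n => A^[n] v0 with hx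
  have hR0 : 0 ≤ R := le_trans (norm_nonneg _) (hR 0)
  -- basic properties of L
  have hbdd : ∀ a : ℕ →ᵇ ℝ, BddAbove (Set.range (⇑a)) := fun a => a.isBounded_range.bddAbove
  have hLmono : ∀ a b : ℕ →ᵇ ℝ, (∀ n, a n ≤ b n) → L a ≤ L b := by
    intro a b h
    have h1 : L (a - b) ≤ ⨆ n, (a - b) n := hL1 _
    have h2 : (⨆ n, (a - b) n) ≤ 0 := ciSup_le fun n => by
      simp only [BoundedContinuousFunction.coe_sub, Pi.sub_apply]
      exact sub_nonpos.2 (h n)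
    have h3 : L (a - b) = L a - L b := map_sub L a b
    linarith
  have hLdiff : ∀ a b : ℕ →ᵇ ℝ,
      Tendsto (fun n => a n - b n) atTop (nhds 0) → L a = L b := by
    intro a b h
    have h1 : L (a - b) = 0 := hL2 (a - b) 0 (by simpa [Pi.sub_def] using h)
    have h3 : L (a - b) = L a - L b := map_sub L a b
    linarith
  have hLabs : ∀ (a : ℕ →ᵇ ℝ) (C : ℝ), (∀ n, |a n| ≤ C) → |L a| ≤ C := by
    intro a C h
    have h1 : L a ≤ C := (hL1 a).trans (ciSup_le fun n => (le_abs_self _).trans (h n))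
    have h2 : L (-a) ≤ C := (hL1 (-a)).trans (ciSup_le fun n => by
      simp only [BoundedContinuousFunction.coe_neg, Pi.neg_apply]
      exact (neg_le_abs _).trans (h n))
    have h3 : L (-a) = -L a := map_neg L a
    rw [abs_le]; constructor <;> linarith
  -- the inner-product sequences as bounded functions
  set c : H → (ℕ →ᵇ ℝ) := fun y =>
    ofNormedAddCommGroupDiscrete (fun j => ⟪x (k j), y⟫) (R * ‖y‖) (fun j => by
      rw [Real.norm_eq_abs]
      exact (abs_real_inner_le_norm _ _).trans
        (mul_le_mul_of_nonneg_right (hR _) (norm_nonneg _))) with hc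
  have hcapp : ∀ (y : H) (j : ℕ), c y j = ⟪x (k j), y⟫ := fun y j => rfl
  -- the representing vector
  obtain ⟨w, hw⟩ : ∃ w : H, ∀ y : H, ⟪w, y⟫ = L (c y) := by
    set φlin : H →ₗ[ℝ] ℝ :=
      { toFun := fun y => L (c y)
        map_add' := by
          intro y y'
          have h : c (y + y') = c y + c y' := by
            ext j
            simp [hcapp, inner_add_right]
          show L (c (y + y')) = L (c y) + L (c y')
          rw [h, map_add]
        map_smul' := by
          intro r y
          have h : c (r • y) = r • c y := by
            ext j
            simp [hcapp, inner_smul_right]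
          show L (c (r • y)) = r • L (c y)
          rw [h, map_smul] } with hφlin
    set φ : H →L[ℝ] ℝ := LinearMap.mkContinuous φlin R (fun y => by
      have : |L (c y)| ≤ R * ‖y‖ := hLabs _ _ (fun j => by
        exact (abs_real_inner_le_norm _ _).trans
          (mul_le_mul_of_nonneg_right (hR _) (norm_nonneg _)))
      simpa [hφlin] using this) with hφ
    exact ⟨(InnerProductSpace.toDual ℝ H).symm φ,
      fun y => InnerProductSpace.toDual_symm_apply⟩
  -- the quadratic functionals
  set Q : H → (ℕ →ᵇ ℝ) := fun z =>
    ofNormedAddCommGroupDiscrete (fun j => ‖x (k j) - z‖ ^ 2) ((R + ‖z‖) ^ 2) (fun j => by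
      rw [Real.norm_eq_abs, abs_of_nonneg (by positivity)]
      refine pow_le_pow_left₀ (norm_nonneg _) ?_ 2
      exact (norm_sub_le _ _).trans (add_le_add_left (hR _) _)) with hQdef
  have hQapp : ∀ (z : H) (j : ℕ), Q z j = ‖x (k j) - z‖ ^ 2 := fun z j => rfl
  set b0 : ℕ →ᵇ ℝ :=
    ofNormedAddCommGroupDiscrete (fun j => ‖x (k j)‖ ^ 2) (R ^ 2) (fun j => by
      rw [Real.norm_eq_abs, abs_of_nonneg (by positivity)]
      exact pow_le_pow_left₀ (norm_nonneg _) (hR _) 2) with hb0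
  have hQ : ∀ z : H, L (Q z) = L b0 - 2 * ⟪w, z⟫ + ‖z‖ ^ 2 := by
    intro z
    have heq : Q z = b0 - (2 : ℝ) • c z + BoundedContinuousFunction.const ℕ (‖z‖ ^ 2) := by
      ext j
      simp only [BoundedContinuousFunction.coe_add, BoundedContinuousFunction.coe_sub,
        BoundedContinuousFunction.coe_smul, Pi.add_apply, Pi.sub_apply, Pi.smul_apply,
        BoundedContinuousFunction.const_apply, hQapp, hcapp, smul_eq_mul]
      exact norm_sub_sq_real _ _
    rw [heq, map_add, map_sub, map_smul, smul_eq_mul,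
      hL2 (BoundedContinuousFunction.const ℕ (‖z‖ ^ 2)) (‖z‖ ^ 2)
        (by simpa using (tendsto_const_nhds : Tendsto (fun _ : ℕ => ‖z‖ ^ 2) atTop _)),
      hw z]
  have hstep : ∀ z : H, L (Q (A z)) ≤ L (Q z) := by
    intro z
    set Q' : ℕ →ᵇ ℝ :=
      ofNormedAddCommGroupDiscrete (fun j => ‖x (k j + 1) - A z‖ ^ 2) ((R + ‖A z‖) ^ 2)
        (fun j => by
          rw [Real.norm_eq_abs, abs_of_nonneg (by positivity)]
          refine pow_le_pow_left₀ (norm_nonneg _) ?_ 2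
          exact (norm_sub_le _ _).trans (add_le_add_left (hR _) _)) with hQ'
    have h1 : L (Q (A z)) = L Q' := by
      apply hLdiff
      apply squeeze_zero_norm
        (a := fun j => ‖x (k j + 1) - x (k j)‖ * (2 * (R + ‖A z‖)))
      · intro j
        have hQa : Q (A z) j = ‖x (k j) - A z‖ ^ 2 := rfl
        have hQ'a : Q' j = ‖x (k j + 1) - A z‖ ^ 2 := rfl
        rw [Real.norm_eq_abs, hQa, hQ'a]
        set a1 := ‖x (k j) - A z‖
        set b1 := ‖x (k j + 1) - A z‖
        have ha1 : 0 ≤ a1 := norm_nonneg _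
        have hb1 : 0 ≤ b1 := norm_nonneg _
        have hdiff : |a1 - b1| ≤ ‖x (k j + 1) - x (k j)‖ := by
          rw [← norm_sub_rev]
          have : x (k j) - A z - (x (k j + 1) - A z) = x (k j) - x (k j + 1) := by abel
          calc |a1 - b1| ≤ ‖x (k j) - A z - (x (k j + 1) - A z)‖ := abs_norm_sub_norm_le _ _
            _ = ‖x (k j) - x (k j + 1)‖ := by rw [this]
        have hsum : a1 + b1 ≤ 2 * (R + ‖A z‖) := by
          have h1 : a1 ≤ R + ‖A z‖ :=
            (norm_sub_le _ _).trans (add_le_add_left (hR _) _)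
          have h2 : b1 ≤ R + ‖A z‖ :=
            (norm_sub_le _ _).trans (add_le_add_left (hR _) _)
          linarith
        calc |a1 ^ 2 - b1 ^ 2| = |a1 + b1| * |a1 - b1| := by rw [sq_sub_sq, abs_mul]
          _ = (a1 + b1) * |a1 - b1| := by rw [abs_of_nonneg (by linarith)]
          _ ≤ (2 * (R + ‖A z‖)) * ‖x (k j + 1) - x (k j)‖ :=
              mul_le_mul hsum hdiff (abs_nonneg _) (by linarith)
          _ = ‖x (k j + 1) - x (k j)‖ * (2 * (R + ‖A z‖)) := mul_comm _ _
      · have := (hreg.comp hk).mul_const (2 * (R + ‖A z‖))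
        simpa only [Function.comp_def, zero_mul] using this
    have h2 : L Q' ≤ L (Q z) := by
      apply hLmono
      intro j
      have hQ'a : Q' j = ‖x (k j + 1) - A z‖ ^ 2 := rfl
      have hQa : Q z j = ‖x (k j) - z‖ ^ 2 := rfl
      rw [hQ'a, hQa]
      refine pow_le_pow_left₀ (norm_nonneg _) ?_ 2
      have : x (k j + 1) = A (x (k j)) := Function.iterate_succ_apply' A (k j) v0
      rw [this]
      exact hA _ _
    exact h1.le.trans h2
  -- w is a fixed point
  have hAw : A w = w := by
    have h1 := hstep w
    rw [hQ (A w), hQ w] at h1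
    have hww : ⟪w, w⟫ = ‖w‖ ^ 2 := real_inner_self_eq_norm_sq w
    have h0 : ‖A w - w‖ ^ 2 ≤ 0 := by
      rw [norm_sub_sq_real, real_inner_comm]
      linarith
    have h00 : ‖A w - w‖ ^ 2 = 0 := le_antisymm h0 (by positivity)
    have := norm_eq_zero.1 (sq_eq_zero_iff.1 h00)
    exact sub_eq_zero.1 this
  refine ⟨w, hAw, ?_⟩
  intro y a ha
  have : a = c y := by
    ext j
    rw [ha j, hcapp]
  rw [this, ← hw]

open scoped RealInnerProductSpace
open Filter BoundedContinuousFunction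

theorem stmt_13
    {H : Type*} [NormedAddCommGroup H] [InnerProductSpace ℝ H] [CompleteSpace H]
    (A : H → H) (hA : ∀ v v' : H, ‖A v - A v'‖ ≤ ‖v - v'‖)
    (v0 : H)
    (hreg : Filter.Tendsto (fun n => ‖A^[n + 1] v0 - A^[n] v0‖) Filter.atTop (nhds 0))
    (hfix : ∃ v : H, A v = v) :
    ∃ vstar : H, A vstar = vstar ∧
      ∀ y : H, Filter.Tendsto (fun n => ⟪A^[n] v0, y⟫) Filter.atTop (nhds ⟪vstar, y⟫) := by
  classical
  obtain ⟨p, hp⟩ := hfix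
  set x : ℕ → H := fun n => A^[n] v0 with hx
  have hanti : ∀ z : H, A z = z → Antitone (fun n => ‖x n - z‖) := by
    intro z hz
    apply antitone_nat_of_succ_le
    intro n
    have h1 : x (n + 1) = A (x n) := Function.iterate_succ_apply' A n v0
    calc ‖x (n + 1) - z‖ = ‖A (x n) - A z‖ := by rw [h1, hz]
      _ ≤ ‖x n - z‖ := hA _ _
  set R : ℝ := ‖v0 - p‖ + ‖p‖ with hRdef
  have hR : ∀ n, ‖x n‖ ≤ R := by
    intro n
    have h1 : ‖x n - p‖ ≤ ‖x 0 - p‖ := hanti p hp (Nat.zero_le n)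
    have h2 : x 0 = v0 := rfl
    calc ‖x n‖ = ‖x n - p + p‖ := by rw [sub_add_cancel]
      _ ≤ ‖x n - p‖ + ‖p‖ := norm_add_le _ _
      _ ≤ ‖v0 - p‖ + ‖p‖ := by rw [← h2]; linarith
  have hR0 : 0 ≤ R := le_trans (norm_nonneg _) (hR 0)
  obtain ⟨L, hL1, hL2⟩ := exists_genlim
  obtain ⟨v, hv, hvL⟩ := key_lemma A hA v0 hreg L hL1 hL2 R hR id tendsto_id
  have hconv : ∀ z : H, A z = z → ∃ d : ℝ, Tendsto (fun n => ‖x n - z‖) atTop (nhds d) := by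
    intro z hz
    exact ⟨_, tendsto_atTop_ciInf (hanti z hz)
      ⟨0, by rintro r ⟨n, rfl⟩; exact norm_nonneg _⟩⟩
  -- uniqueness of generalized weak limits
  have huniq : ∀ (k : ℕ → ℕ), Tendsto k atTop atTop → ∀ w : H, A w = w →
      (∀ (y : H) (a : ℕ →ᵇ ℝ), (∀ j, a j = ⟪x (k j), y⟫) → L a = ⟪w, y⟫) → w = v := by
    intro k hk w hw hwL
    obtain ⟨d1, hd1⟩ := hconv v hv
    obtain ⟨d2, hd2⟩ := hconv w hw
    set γ : ℝ := (d2 ^ 2 - d1 ^ 2 - ‖w‖ ^ 2 + ‖v‖ ^ 2) / 2 with hγ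
    have ht : Tendsto (fun n => ⟪x n, v - w⟫) atTop (nhds γ) := by
      have h1 : ∀ n, ⟪x n, v - w⟫
          = (‖x n - w‖ ^ 2 - ‖x n - v‖ ^ 2 - ‖w‖ ^ 2 + ‖v‖ ^ 2) / 2 := by
        intro n
        have e1 := norm_sub_sq_real (x n) w
        have e2 := norm_sub_sq_real (x n) v
        have e3 : ⟪x n, v - w⟫ = ⟪x n, v⟫ - ⟪x n, w⟫ := inner_sub_right _ _ _
        rw [e3]; linarith
      simp only [h1]
      exact ((((hd2.pow 2).sub (hd1.pow 2)).sub_const (‖w‖ ^ 2)).add_const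
        (‖v‖ ^ 2)).div_const 2
    have hbound : ∀ n, ‖⟪x n, v - w⟫‖ ≤ R * ‖v - w‖ := fun n => by
      rw [Real.norm_eq_abs]
      exact (abs_real_inner_le_norm _ _).trans
        (mul_le_mul_of_nonneg_right (hR _) (norm_nonneg _))
    set a1 : ℕ →ᵇ ℝ :=
      ofNormedAddCommGroupDiscrete (fun n => ⟪x n, v - w⟫) (R * ‖v - w‖) hbound with ha1
    set a2 : ℕ →ᵇ ℝ :=
      ofNormedAddCommGroupDiscrete (fun j => ⟪x (k j), v - w⟫) (R * ‖v - w‖)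
        (fun j => hbound (k j)) with ha2
    have e1 : L a1 = γ := hL2 _ _ ht
    have e1' : L a1 = ⟪v, v - w⟫ := hvL (v - w) a1 (fun j => rfl)
    have e2 : L a2 = γ := hL2 _ _ (ht.comp hk)
    have e2' : L a2 = ⟪w, v - w⟫ := hwL (v - w) a2 (fun j => rfl)
    have hz : ⟪v - w, v - w⟫ = 0 := by
      rw [inner_sub_left]; linarith
    have := inner_self_eq_zero.1 hz
    exact (sub_eq_zero.1 this).symm
  refine ⟨v, hv, ?_⟩
  intro y
  by_contra hcon
  rw [Metric.tendsto_atTop] at hcon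
  push_neg at hcon
  obtain ⟨ε, hε, hfreq⟩ := hcon
  obtain ⟨φ, hφmono, hφ⟩ :=
    extraction_of_frequently_atTop (frequently_atTop.2 hfreq)
  have hmem : ∀ j, ⟪x (φ j), y⟫ ∈ Set.Icc (-(R * ‖y‖)) (R * ‖y‖) := by
    intro j
    rw [Set.mem_Icc, ← abs_le]
    exact (abs_real_inner_le_norm _ _).trans
      (mul_le_mul_of_nonneg_right (hR _) (norm_nonneg _))
  obtain ⟨ℓ, -, m, hm, hlim⟩ :=
    tendsto_subseq_of_bounded (Metric.isBounded_Icc (-(R * ‖y‖)) (R * ‖y‖)) hmem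
  set k : ℕ → ℕ := φ ∘ m with hkdef
  have hkt : Tendsto k atTop atTop := (hφmono.comp hm).tendsto_atTop
  obtain ⟨w, hwfix, hwL⟩ := key_lemma A hA v0 hreg L hL1 hL2 R hR k hkt
  have hwv : w = v := huniq k hkt w hwfix hwL
  set a3 : ℕ →ᵇ ℝ :=
    ofNormedAddCommGroupDiscrete (fun j => ⟪x (k j), y⟫) (R * ‖y‖) (fun j => by
      rw [Real.norm_eq_abs]
      exact (abs_real_inner_le_norm _ _).trans
        (mul_le_mul_of_nonneg_right (hR _) (norm_nonneg _))) with ha3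
  have hlim' : Tendsto (⇑a3) atTop (nhds ℓ) := hlim
  have e3 : L a3 = ℓ := hL2 _ _ hlim'
  have e3' : L a3 = ⟪w, y⟫ := hwL y a3 (fun j => rfl)
  have hℓ : ℓ = ⟪v, y⟫ := by rw [← e3, e3', hwv]
  obtain ⟨N, hN⟩ := Metric.tendsto_atTop.1 hlim' ε hε
  have h1 := hN N le_rfl
  rw [hℓ] at h1
  have h2 : ε ≤ dist (a3 N) ⟪v, y⟫ := hφ (m N)
  exact absurd h1 (not_lt.2 h2)
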